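/- arXiv:1006.5134 — 4 statements merged into one kernel-verified Lean document; each statement's English description precedes it below -/
import Mathlib

section
/- For every natural number m, the alternating sum over i from 0 to 2m of (-1)^i * C(-2m-1, i) * C(-2m-1, 2m-i) * C(2m, i) equals (-1)^m * (3m)! / (m!)^3, where C(t,k) denotes the generalized binomial coefficient t(t-1)...(t-k+1)/k!. -/
open Finset Nat

/-- Generalized binomial coefficient `C(t,k) = t(t-1)⋯(t-k+1)/k!`. -/
def gchoose (t : ℚ) (k : ℕ) : ℚ := (∏ j ∈ Finset.range k, (t - j)) / (Nat.factorial k)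

lemma prod_desc (n i : ℕ) (h : i ≤ n) :
    ∏ j ∈ Finset.range i, ((n : ℚ) - j) = n ! / (n - i)! := by
  induction i with
  | zero =>
    have : ((n)! : ℚ) ≠ 0 := by positivity
    simp [div_self this]
  | succ k ih =>
    have e2 : ((n-k)! : ℚ) = ((n:ℚ) - k) * ((n-(k+1))! : ℚ) := by
      rw [show n - k = (n-(k+1)) + 1 by omega, Nat.factorial_succ]
      push_cast [Nat.cast_sub (show k+1 ≤ n by omega)]
      ring
    have h3 : ((n - (k+1))! : ℚ) ≠ 0 := by positivity
    have h4 : ((n:ℚ) - k) ≠ 0 := by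
      have : (k:ℚ) + 1 ≤ n := by exact_mod_cast Nat.succ_le_of_lt (by omega)
      nlinarith
    rw [Finset.prod_range_succ, ih (by omega), e2]
    field_simp

lemma prod_asc (a i : ℕ) :
    ∏ j ∈ Finset.range i, (-(a : ℚ) - 1 - j) = (-1:ℚ)^i * (a+i)! / a ! := by
  induction i with
  | zero =>
    have : ((a)! : ℚ) ≠ 0 := by positivity
    simp [div_self this]
  | succ k ih =>
    rw [Finset.prod_range_succ, ih]
    rw [show a + (k+1) = (a+k)+1 by ring, Nat.factorial_succ]
    have ha : ((a)! : ℚ) ≠ 0 := by positivity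
    push_cast
    field_simp
    ring

def F (m i : ℕ) : ℚ :=
  (-1)^i * ((2*m+i).choose i : ℚ) * ((4*m-i).choose (2*m-i) : ℚ) * ((2*m).choose i : ℚ)

lemma term_eq (m i : ℕ) (h : i ≤ 2*m) :
    (-1 : ℚ) ^ i * gchoose (-2 * m - 1) i * gchoose (-2 * m - 1) (2 * m - i) *
        gchoose (2 * m) i = F m i := by
  unfold gchoose F
  have hc1 : ∀ r : ℕ, ∏ j ∈ Finset.range r, ((-2 * m - 1 : ℚ) - j)
      = (-1:ℚ)^r * ((2*m+r)! : ℚ) / ((2*m)! : ℚ) := by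
    intro r
    rw [← prod_asc (2*m) r]
    apply Finset.prod_congr rfl
    intro j _
    push_cast
    ring
  rw [hc1 i, hc1 (2*m-i)]
  have hp : ∏ j ∈ Finset.range i, ((2 * (m:ℚ)) - j) = ((2*m)! : ℚ) / ((2*m-i)! : ℚ) := by
    rw [← prod_desc (2*m) i h]
    apply Finset.prod_congr rfl
    intro j _; push_cast; ring
  rw [hp]
  rw [Nat.cast_choose ℚ (show i ≤ 2*m+i by omega),
      Nat.cast_choose ℚ (show 2*m-i ≤ 4*m-i by omega),
      Nat.cast_choose ℚ h]
  rw [show 2*m+i-i = 2*m by omega, show 4*m-i-(2*m-i) = 2*m by omega,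
      show 2*m+(2*m-i) = 4*m-i by omega]
  have hsign : (-1:ℚ)^(2*m-i) = (-1:ℚ)^i := by
    rcases Nat.even_or_odd i with he | ho
    · rw [he.neg_one_pow, Even.neg_one_pow ((Nat.even_sub h).2 (by simp [he, Nat.even_mul]))]
    · rw [ho.neg_one_pow, Odd.neg_one_pow (by
        rcases ho with ⟨t, ht⟩
        exact ⟨m - t - 1, by omega⟩)]
  rw [hsign]
  have h1 : ((2*m)! : ℚ) ≠ 0 := by positivity
  have h2 : ((2*m-i)! : ℚ) ≠ 0 := by positivity
  have h3 : ((i)! : ℚ) ≠ 0 := by positivity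
  have h4 : ((2*m+i)! : ℚ) ≠ 0 := by positivity
  have h5 : ((4*m-i)! : ℚ) ≠ 0 := by positivity
  rcases Nat.even_or_odd i with he | ho
  · rw [he.neg_one_pow]; field_simp
  · rw [ho.neg_one_pow]; field_simp

def Qp (m i : ℚ) : ℚ :=
  180 - 184*i + 59*i^2 - 8*i^3 + i^4
  + m*(1036 - 790*i + 168*i^2 - 10*i^3)
  + m^2*(2192 - 1116*i + 120*i^2)
  + m^3*(2024 - 520*i) + m^4*688

def g (m i : ℕ) : ℚ :=
  if i ≤ 2*m+2 then
    (-1)^(i+1) * (i:ℚ)^2 * ((m:ℚ)+1) * Qp m i * ((2*m+i)! : ℚ) * ((4*m+1-i)! : ℚ)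
      / (4*(2*(m:ℚ)+1) * ((i)! : ℚ)^2 * (((2*m+2-i)!) : ℚ)^2 * ((2*m)! : ℚ))
  else 0

lemma F_zero (m i : ℕ) (h : 2*m < i) : F m i = 0 := by
  unfold F; rw [Nat.choose_eq_zero_of_lt h]; simp

lemma keyb (n : ℕ) :
    (((n+1:ℕ):ℚ)+1)^3 * F ((n+1)+1) (2*(n+1)+1)
      + (3*((n+1:ℕ):ℚ)+1)*(3*((n+1:ℕ):ℚ)+2)*(3*((n+1:ℕ):ℚ)+3) * F (n+1) (2*(n+1)+1)
      = g (n+1) (2*(n+1)+1+1) - g (n+1) (2*(n+1)+1) := by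
  rw [F_zero (n+1) (2*(n+1)+1) (by omega)]
  unfold F g Qp
  rw [if_pos (by omega), if_pos (by omega)]
  rw [show 2*(n+1+1)+(2*(n+1)+1) = 4*n+7 by omega,
      show 4*(n+1+1)-(2*(n+1)+1) = 2*n+5 by omega,
      show 2*(n+1+1)-(2*(n+1)+1) = 1 by omega,
      show 2*(n+1+1) = 2*n+4 by omega,
      show 2*(n+1)+(2*(n+1)+1+1) = 4*n+6 by omega,
      show 4*(n+1)+1-(2*(n+1)+1+1) = 2*n+1 by omega,
      show 2*(n+1)+2-(2*(n+1)+1+1) = 0 by omega,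
      show 2*(n+1)+(2*(n+1)+1) = 4*n+5 by omega,
      show 4*(n+1)+1-(2*(n+1)+1) = 2*n+2 by omega,
      show 2*(n+1)+2-(2*(n+1)+1) = 1 by omega,
      show 2*(n+1)+1+1 = 2*n+4 by omega,
      show 2*(n+1)+1 = 2*n+3 by omega,
      show 2*(n+1) = 2*n+2 by omega]
  rw [Nat.cast_choose ℚ (show 2*n+3 ≤ 4*n+7 by omega),
      Nat.cast_choose ℚ (show 1 ≤ 2*n+5 by omega),
      Nat.cast_choose ℚ (show 2*n+3 ≤ 2*n+4 by omega)]
  rw [show 4*n+7-(2*n+3) = 2*n+4 by omega, show 2*n+5-1 = 2*n+4 by omega,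
      show 2*n+4-(2*n+3) = 1 by omega]
  have e1 : ((4*n+7)! : ℚ) = (4*(n:ℚ)+7)*(4*(n:ℚ)+6) * ((4*n+5)! : ℚ) := by
    rw [show 4*n+7 = (((4*n+5)+1)+1) by omega]
    simp only [Nat.factorial_succ]; push_cast; ring
  have e2 : ((4*n+6)! : ℚ) = (4*(n:ℚ)+6) * ((4*n+5)! : ℚ) := by
    rw [show 4*n+6 = ((4*n+5)+1) by omega]
    simp only [Nat.factorial_succ]; push_cast; ring
  have e3 : ((2*n+5)! : ℚ)
      = (2*(n:ℚ)+5)*(2*(n:ℚ)+4)*(2*(n:ℚ)+3)*(2*(n:ℚ)+2) * ((2*n+1)! : ℚ) := by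
    rw [show 2*n+5 = ((((2*n+1)+1)+1+1)+1 : ℕ) by omega]
    simp only [Nat.factorial_succ]; push_cast; ring
  have e4 : ((2*n+4)! : ℚ) = (2*(n:ℚ)+4)*(2*(n:ℚ)+3)*(2*(n:ℚ)+2) * ((2*n+1)! : ℚ) := by
    rw [show 2*n+4 = ((((2*n+1)+1)+1)+1 : ℕ) by omega]
    simp only [Nat.factorial_succ]; push_cast; ring
  have e5 : ((2*n+3)! : ℚ) = (2*(n:ℚ)+3)*(2*(n:ℚ)+2) * ((2*n+1)! : ℚ) := by
    rw [show 2*n+3 = (((2*n+1)+1)+1 : ℕ) by omega]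
    simp only [Nat.factorial_succ]; push_cast; ring
  have e6 : ((2*n+2)! : ℚ) = (2*(n:ℚ)+2) * ((2*n+1)! : ℚ) := by
    rw [show 2*n+2 = ((2*n+1)+1 : ℕ) by omega]
    simp only [Nat.factorial_succ]; push_cast; ring
  rw [e1, e2, e3, e4, e5, e6]
  have s1 : (-1:ℚ)^(2*n+3) = -1 := by
    rw [pow_add, pow_mul]; norm_num
  have s2 : (-1:ℚ)^(2*n+4) = 1 := by
    rw [pow_add, pow_mul]; norm_num
  have s3 : (-1:ℚ)^(2*n+4+1) = -1 := by
    rw [pow_succ, s2]; norm_num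
  have s4 : (-1:ℚ)^(2*n+3+1) = 1 := by
    rw [pow_succ, s1]; norm_num
  rw [s1, s3, s4]
  have n1 : ((4*n+5)! : ℚ) ≠ 0 := by positivity
  have n2 : ((2*n+1)! : ℚ) ≠ 0 := by positivity
  have n3 : (2*(n:ℚ)+2) ≠ 0 := by positivity
  have n4 : (2*(n:ℚ)+3) ≠ 0 := by positivity
  have n5 : (2*(n:ℚ)+4) ≠ 0 := by positivity
  push_cast
  field_simp
  ring

lemma keyc (n : ℕ) :
    (((n+1:ℕ):ℚ)+1)^3 * F ((n+1)+1) (2*(n+1)+2)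
      + (3*((n+1:ℕ):ℚ)+1)*(3*((n+1:ℕ):ℚ)+2)*(3*((n+1:ℕ):ℚ)+3) * F (n+1) (2*(n+1)+2)
      = g (n+1) (2*(n+1)+2+1) - g (n+1) (2*(n+1)+2) := by
  rw [F_zero (n+1) (2*(n+1)+2) (by omega)]
  unfold F g Qp
  rw [if_neg (by omega), if_pos (by omega)]
  rw [show 2*(n+1+1)+(2*(n+1)+2) = 4*n+8 by omega,
      show 4*(n+1+1)-(2*(n+1)+2) = 2*n+4 by omega,
      show 2*(n+1+1)-(2*(n+1)+2) = 0 by omega,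
      show 2*(n+1+1) = 2*n+4 by omega,
      show 2*(n+1)+(2*(n+1)+2) = 4*n+6 by omega,
      show 4*(n+1)+1-(2*(n+1)+2) = 2*n+1 by omega,
      show 2*(n+1)+2-(2*(n+1)+2) = 0 by omega,
      show 2*(n+1)+2 = 2*n+4 by omega,
      show 2*(n+1) = 2*n+2 by omega]
  rw [Nat.choose_zero_right, Nat.choose_self,
      Nat.cast_choose ℚ (show 2*n+4 ≤ 4*n+8 by omega)]
  rw [show 4*n+8-(2*n+4) = 2*n+4 by omega]
  have e1 : ((4*n+8)! : ℚ)
      = (4*(n:ℚ)+8)*(4*(n:ℚ)+7)*(4*(n:ℚ)+6) * ((4*n+5)! : ℚ) := by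
    rw [show 4*n+8 = ((((4*n+5)+1)+1)+1) by omega]
    simp only [Nat.factorial_succ]; push_cast; ring
  have e2 : ((4*n+6)! : ℚ) = (4*(n:ℚ)+6) * ((4*n+5)! : ℚ) := by
    rw [show 4*n+6 = ((4*n+5)+1) by omega]
    simp only [Nat.factorial_succ]; push_cast; ring
  have e4 : ((2*n+4)! : ℚ) = (2*(n:ℚ)+4)*(2*(n:ℚ)+3)*(2*(n:ℚ)+2) * ((2*n+1)! : ℚ) := by
    rw [show 2*n+4 = ((((2*n+1)+1)+1)+1 : ℕ) by omega]
    simp only [Nat.factorial_succ]; push_cast; ring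
  have e6 : ((2*n+2)! : ℚ) = (2*(n:ℚ)+2) * ((2*n+1)! : ℚ) := by
    rw [show 2*n+2 = ((2*n+1)+1 : ℕ) by omega]
    simp only [Nat.factorial_succ]; push_cast; ring
  rw [e1, e2, e4, e6]
  have s2 : (-1:ℚ)^(2*n+4) = 1 := by rw [pow_add, pow_mul]; norm_num
  have s3 : (-1:ℚ)^(2*n+4+1) = -1 := by rw [pow_succ, s2]; norm_num
  rw [s2, s3]
  have n1 : ((4*n+5)! : ℚ) ≠ 0 := by positivity
  have n2 : ((2*n+1)! : ℚ) ≠ 0 := by positivity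
  have n3 : (2*(n:ℚ)+2) ≠ 0 := by positivity
  have n4 : (2*(n:ℚ)+3) ≠ 0 := by positivity
  have n5 : (2*(n:ℚ)+4) ≠ 0 := by positivity
  push_cast
  field_simp
  ring

set_option maxHeartbeats 2000000 in
lemma key (m i : ℕ) (hm : 1 ≤ m) (hi : i ≤ 2*m+2) :
    ((m:ℚ)+1)^3 * F (m+1) i + (3*(m:ℚ)+1)*(3*(m:ℚ)+2)*(3*(m:ℚ)+3) * F m i
      = g m (i+1) - g m i := by
  rcases le_or_gt i (2*m) with ha | hb
  · obtain ⟨k, hk⟩ : ∃ k, 2*m = i + k := ⟨2*m - i, by omega⟩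
    unfold F g Qp
    rw [if_pos (by omega), if_pos (by omega)]
    rw [show 2*m+i = 2*i+k by omega, show 2*m+(i+1) = 2*i+k+1 by omega,
        show 4*m+1-(i+1) = i+2*k by omega, show 4*m+1-i = i+2*k+1 by omega,
        show 4*m-i = i+2*k by omega, show 2*m+2-(i+1) = k+1 by omega,
        show 2*m+2-i = k+2 by omega, show 2*m-i = k by omega,
        show 2*(m+1)+i = 2*i+k+2 by omega, show 4*(m+1)-i = i+2*k+4 by omega,
        show 2*(m+1)-i = k+2 by omega, show 2*(m+1) = i+k+2 by omega,
        show 2*m = i+k by omega]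
    have hmq : (m:ℚ) = ((i:ℚ)+(k:ℚ))/2 := by
      have : (2:ℚ)*m = (i:ℚ)+(k:ℚ) := by exact_mod_cast congrArg (Nat.cast (R := ℚ)) hk
      linarith
    rw [hmq]
    rw [Nat.cast_choose ℚ (show i ≤ 2*i+k by omega),
        Nat.cast_choose ℚ (show k ≤ i+2*k by omega),
        Nat.cast_choose ℚ (show i ≤ i+k by omega),
        Nat.cast_choose ℚ (show i ≤ 2*i+k+2 by omega),
        Nat.cast_choose ℚ (show k+2 ≤ i+2*k+4 by omega),
        Nat.cast_choose ℚ (show i ≤ i+k+2 by omega)]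
    rw [show 2*i+k-i = i+k by omega, show i+2*k-k = i+k by omega,
        show i+k-i = k by omega, show 2*i+k+2-i = i+k+2 by omega,
        show i+2*k+4-(k+2) = i+k+2 by omega, show i+k+2-i = k+2 by omega]
    have hA1 : ((2*i+k+1)! : ℚ) = (2*(i:ℚ)+k+1) * ((2*i+k)! : ℚ) := by
      simp only [Nat.factorial_succ]; push_cast; ring
    have hA2 : ((2*i+k+2)! : ℚ) = (2*(i:ℚ)+k+2) * (2*(i:ℚ)+k+1) * ((2*i+k)! : ℚ) := by
      rw [show 2*i+k+2 = ((2*i+k)+1)+1 by omega]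
      simp only [Nat.factorial_succ]; push_cast; ring
    have hB1 : ((i+2*k+1)! : ℚ) = ((i:ℚ)+2*k+1) * ((i+2*k)! : ℚ) := by
      simp only [Nat.factorial_succ]; push_cast; ring
    have hB4 : ((i+2*k+4)! : ℚ)
        = ((i:ℚ)+2*k+4)*((i:ℚ)+2*k+3)*((i:ℚ)+2*k+2)*((i:ℚ)+2*k+1) * ((i+2*k)! : ℚ) := by
      rw [show i+2*k+4 = ((((i+2*k)+1)+1+1)+1) by omega]
      simp only [Nat.factorial_succ]; push_cast; ring
    have hC1 : ((i+1)! : ℚ) = ((i:ℚ)+1) * ((i)! : ℚ) := by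
      simp only [Nat.factorial_succ]; push_cast; ring
    have hD1 : ((k+1)! : ℚ) = ((k:ℚ)+1) * ((k)! : ℚ) := by
      simp only [Nat.factorial_succ]; push_cast; ring
    have hD2 : ((k+2)! : ℚ) = ((k:ℚ)+2)*((k:ℚ)+1) * ((k)! : ℚ) := by
      rw [show k+2 = ((k+1)+1) by omega]
      simp only [Nat.factorial_succ]; push_cast; ring
    have hE2 : ((i+k+2)! : ℚ) = ((i:ℚ)+k+2)*((i:ℚ)+k+1) * ((i+k)! : ℚ) := by
      rw [show i+k+2 = (((i+k)+1)+1) by omega]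
      simp only [Nat.factorial_succ]; push_cast; ring
    rw [hA1, hA2, hB1, hB4, hC1, hD1, hD2, hE2]
    rw [show i+1+1 = i+2 by omega, pow_succ, pow_succ, pow_succ]
    have n1 : ((i)! : ℚ) ≠ 0 := by positivity
    have n2 : ((k)! : ℚ) ≠ 0 := by positivity
    have n3 : (((i+k))! : ℚ) ≠ 0 := by positivity
    have n4 : (((2*i+k))! : ℚ) ≠ 0 := by positivity
    have n5 : (((i+2*k))! : ℚ) ≠ 0 := by positivity
    have n6 : ((i:ℚ)+k+1) ≠ 0 := by positivity
    have n7 : ((i:ℚ)+k+2) ≠ 0 := by positivity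
    have n8 : ((i:ℚ)+1) ≠ 0 := by positivity
    have n9 : ((k:ℚ)+1) ≠ 0 := by positivity
    have n10 : ((k:ℚ)+2) ≠ 0 := by positivity
    field_simp
    push_cast
    ring
  · obtain ⟨n, rfl⟩ : ∃ n, m = n+1 := ⟨m-1, by omega⟩
    rcases (show i = 2*(n+1)+1 ∨ i = 2*(n+1)+2 by omega) with rfl | rfl
    · exact keyb n
    · exact keyc n

def S (m : ℕ) : ℚ := ∑ i ∈ Finset.range (2*m+1), F m i

lemma step (m : ℕ) (hm : 1 ≤ m) :
    ((m:ℚ)+1)^3 * S (m+1) + (3*(m:ℚ)+1)*(3*(m:ℚ)+2)*(3*(m:ℚ)+3) * S m = 0 := by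
  have h1 : S (m+1) = ∑ i ∈ Finset.range (2*m+3), F (m+1) i := by
    unfold S; rw [show 2*(m+1)+1 = 2*m+3 by omega]
  have h2 : S m = ∑ i ∈ Finset.range (2*m+3), F m i := by
    unfold S
    rw [Finset.sum_range_succ (f := F m) (n := 2*m+2),
        Finset.sum_range_succ (f := F m) (n := 2*m+1),
        F_zero m (2*m+1) (by omega), F_zero m (2*m+2) (by omega)]
    ring
  rw [h1, h2, Finset.mul_sum, Finset.mul_sum, ← Finset.sum_add_distrib]
  rw [Finset.sum_congr rfl (fun i hi =>
    key m i hm (by have := Finset.mem_range.mp hi; omega))]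
  rw [Finset.sum_range_sub (g m)]
  have hl : g m 0 = 0 := by
    unfold g; rw [if_pos (by omega)]; simp
  have hr : g m (2*m+3) = 0 := by
    unfold g; rw [if_neg (by omega)]
  rw [hl, hr]
  ring

lemma S_formula' : ∀ m : ℕ, S m * ((m)! : ℚ)^3 = (-1:ℚ)^m * ((3*m)! : ℚ) := by
  intro m
  induction m with
  | zero => simp [S, F, Nat.factorial]
  | succ n ih =>
    match n, ih with
    | 0, _ =>
      rw [show 0+1 = 1 by rfl]
      unfold S
      rw [show 2*1+1 = 3 by rfl, Finset.sum_range_succ, Finset.sum_range_succ,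
          Finset.sum_range_succ, Finset.sum_range_zero]
      unfold F
      have c42 : ((4:ℕ).choose 2) = 6 := rfl
      have c31 : ((3:ℕ).choose 1) = 3 := rfl
      have c21 : ((2:ℕ).choose 1) = 2 := rfl
      norm_num [Nat.factorial, c42, c31, c21]
    | (k+1), ih =>
      have hstep := step (k+1) (by omega)
      have f1 : ((3*(k+1+1))! : ℚ)
          = (3*(k:ℚ)+6)*(3*(k:ℚ)+5)*(3*(k:ℚ)+4) * ((3*(k+1))! : ℚ) := by
        rw [show 3*(k+1+1) = (((3*(k+1))+1)+1)+1 by omega]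
        simp only [Nat.factorial_succ]; push_cast; ring
      have f2 : ((k+1+1)! : ℚ) = ((k:ℚ)+2) * ((k+1)! : ℚ) := by
        simp only [Nat.factorial_succ]; push_cast; ring
      push_cast at hstep ⊢
      linear_combination
        (S (k+1+1) * (((k+1+1)! : ℚ)^2 + ((k+1+1)! : ℚ)*((k:ℚ)+2)*((k+1)! : ℚ)
          + ((k:ℚ)+2)^2*((k+1)! : ℚ)^2)) * f2
        + (((k+1)! : ℚ)^3) * hstep
        + (-((3*(k:ℚ)+4)*(3*(k:ℚ)+5)*(3*(k:ℚ)+6))) * ih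
        + (-(-1:ℚ)^(k+1+1)) * f1

/-- For every natural number `m`,
`∑_{i=0}^{2m} (-1)^i C(-2m-1,i) C(-2m-1,2m-i) C(2m,i) = (-1)^m (3m)! / (m!)^3`. -/
theorem stmt0 (m : ℕ) :
    ∑ i ∈ Finset.range (2 * m + 1),
      (-1 : ℚ) ^ i * gchoose (-2 * m - 1) i * gchoose (-2 * m - 1) (2 * m - i) *
        gchoose (2 * m) i
    = (-1 : ℚ) ^ m * (Nat.factorial (3 * m)) / (Nat.factorial m : ℚ) ^ 3 := by
  have h : ∑ i ∈ Finset.range (2 * m + 1),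
      (-1 : ℚ) ^ i * gchoose (-2 * m - 1) i * gchoose (-2 * m - 1) (2 * m - i) *
        gchoose (2 * m) i = S m := by
    apply Finset.sum_congr rfl
    intro i hi
    exact term_eq m i (by have := Finset.mem_range.mp hi; omega)
  rw [h, eq_div_iff (by positivity : ((m)! : ℚ)^3 ≠ 0)]
  linear_combination S_formula' m
end

section
/- For every natural number m ≥ 1, the sum Sum(m) = Σ_{i=0}^{2m} (-1)^i C(-2m-1,i) C(-2m-1,2m-i) C(2m,i) satisfies the first-order recurrence -(m+1)^2 * Sum(m+1) - 3(3m+1)(3m+2) * Sum(m) = 0. -/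
/-- `Sum(m) = ∑_{i=0}^{2m} (-1)^i C(-2m-1,i) C(-2m-1,2m-i) C(2m,i)`. -/
def zhuSum (m : ℕ) : ℚ :=
  ∑ i ∈ Finset.range (2 * m + 1),
    (-1 : ℚ) ^ i * gchoose (-2 * m - 1) i * gchoose (-2 * m - 1) (2 * m - i) *
      gchoose (2 * m) i

lemma gchoose_zero (t : ℚ) : gchoose t 0 = 1 := by simp [gchoose]

lemma gchoose_one (t : ℚ) : gchoose t 1 = t := by simp [gchoose]

lemma gchoose_succ (t : ℚ) (k : ℕ) :
    ((k : ℚ) + 1) * gchoose t (k + 1) = (t - k) * gchoose t k := by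
  unfold gchoose
  rw [Finset.prod_range_succ, Nat.factorial_succ]
  have hk : ((Nat.factorial k : ℚ)) ≠ 0 := Nat.cast_ne_zero.mpr (Nat.factorial_ne_zero k)
  push_cast
  field_simp

lemma gchoose_top (t : ℚ) (k : ℕ) :
    (t + 1) * (t + 2) * gchoose t k = (t - k + 1) * (t - k + 2) * gchoose (t + 2) k := by
  induction k with
  | zero => simp [gchoose_zero]
  | succ n ih =>
    have h1 := gchoose_succ t n
    have h2 := gchoose_succ (t + 2) n
    have hn : ((n : ℚ) + 1) ≠ 0 := by positivity
    apply mul_left_cancel₀ hn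
    push_cast
    linear_combination (t + 1) * (t + 2) * h1 - (t - n) * (t - n + 1) * h2 + (t - n) * ih

lemma gchoose_nat_eq_zero (n i : ℕ) (h : n < i) : gchoose (n : ℚ) i = 0 := by
  unfold gchoose
  rw [Finset.prod_eq_zero (Finset.mem_range.mpr h) (by simp : ((n : ℚ) - (n : ℕ)) = 0)]
  simp

/-- summand of `zhuSum m`. -/
def T0 (m i : ℕ) : ℚ :=
  (-1 : ℚ) ^ i * gchoose (-2 * (m : ℚ) - 1) i * gchoose (-2 * (m : ℚ) - 1) (2 * m - i) *
    gchoose (2 * (m : ℚ)) i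

/-- summand of `zhuSum (m+1)`. -/
def T1 (m i : ℕ) : ℚ :=
  (-1 : ℚ) ^ i * gchoose (-2 * (m : ℚ) - 3) i * gchoose (-2 * (m : ℚ) - 3) (2 * m + 2 - i) *
    gchoose (2 * (m : ℚ) + 2) i

/-- WZ certificate (rational multiplier). -/
def certQ (M I : ℚ) : ℚ :=
  (I ^ 2 * ((180 + 1216*M + 3228*M^2 + 4216*M^3 + 2712*M^4 + 688*M^5)
    - (184 + 974*M + 1906*M^2 + 1636*M^3 + 520*M^4) * I
    + (59 + 227*M + 288*M^2 + 120*M^3) * I^2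
    - (8 + 18*M + 10*M^2) * I^3
    + (1 + M) * I^4)) /
  (2 * (2*M+1+I) * (2*M+2+I) * (4*M+2-I) * (4*M+3-I) * (4*M+4-I))

def Gc (m i : ℕ) : ℚ := certQ (m : ℚ) (i : ℚ) * T1 m i

set_option maxHeartbeats 4000000 in
lemma scalar_id (M I : ℚ)
    (d3 : (I+1) ≠ 0)
    (d6 : (2*M+1+I) ≠ 0) (d7 : (2*M+2+I) ≠ 0) (d8 : (2*M+3+I) ≠ 0)
    (d9 : (4*M+1-I) ≠ 0) (d10 : (4*M+2-I) ≠ 0) (d11 : (4*M+3-I) ≠ 0) (d12 : (4*M+4-I) ≠ 0) :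
    (-((M : ℚ) + 1) ^ 2) + (-3 * (3*M+1) * (3*M+2)) *
      ((2*M+1-I)^2 * (2*M+2-I)^2 * (2*M+1) * (2*M+2) /
        ((2*M+1+I) * (2*M+2+I) * (4*M+1-I) * (4*M+2-I) * (4*M+3-I) * (4*M+4-I)))
    = certQ M (I+1) * (-(2*M+3+I) * (2*M+2-I)^2 / ((I+1)^2 * (4*M+4-I)))
      - certQ M I := by
  have hDr : ((2*M+1+I) * (2*M+2+I) * (4*M+1-I) * (4*M+2-I) * (4*M+3-I) * (4*M+4-I)) ≠ 0 := by
    exact mul_ne_zero (mul_ne_zero (mul_ne_zero (mul_ne_zero (mul_ne_zero d6 d7) d9) d10) d11) d12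
  unfold certQ
  rw [show (2*M+1+(I+1) : ℚ) = 2*M+2+I from by ring,
      show (2*M+2+(I+1) : ℚ) = 2*M+3+I from by ring,
      show (4*M+2-(I+1) : ℚ) = 4*M+1-I from by ring,
      show (4*M+3-(I+1) : ℚ) = 4*M+2-I from by ring,
      show (4*M+4-(I+1) : ℚ) = 4*M+3-I from by ring]
  have hD1 : (2 * (2*M+2+I) * (2*M+3+I) * (4*M+1-I) * (4*M+2-I) * (4*M+3-I) : ℚ) ≠ 0 := by
    exact mul_ne_zero (mul_ne_zero (mul_ne_zero (mul_ne_zero (mul_ne_zero two_ne_zero d7) d8) d9) d10) d11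
  have hDr2 : ((I+1)^2 * (4*M+4-I) : ℚ) ≠ 0 := mul_ne_zero (pow_ne_zero 2 d3) d12
  have hD0 : (2 * (2*M+1+I) * (2*M+2+I) * (4*M+2-I) * (4*M+3-I) * (4*M+4-I) : ℚ) ≠ 0 := by
    exact mul_ne_zero (mul_ne_zero (mul_ne_zero (mul_ne_zero (mul_ne_zero two_ne_zero d6) d7) d10) d11) d12
  rw [div_mul_div_comm, div_sub_div _ _ (mul_ne_zero hD1 hDr2) hD0,
      mul_div_assoc', add_div' _ _ _ hDr,
      div_eq_div_iff hDr (mul_ne_zero (mul_ne_zero hD1 hDr2) hD0)]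
  ring

set_option maxHeartbeats 1000000 in
lemma key_main (m i : ℕ) (hm : 1 ≤ m) (hi : i ≤ 2 * m) :
    (-((m : ℚ) + 1) ^ 2) * T1 m i + (-3 * (3 * (m : ℚ) + 1) * (3 * (m : ℚ) + 2)) * T0 m i
      = Gc m (i + 1) - Gc m i := by
  have hM : (1 : ℚ) ≤ (m : ℚ) := by exact_mod_cast hm
  have hI0 : (0 : ℚ) ≤ (i : ℚ) := by positivity
  have hI : (i : ℚ) ≤ 2 * (m : ℚ) := by exact_mod_cast hi
  set M := (m : ℚ) with hMdef
  set I := (i : ℚ) with hIdef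
  have d1 : (2*M+1) ≠ 0 := by nlinarith
  have d2 : (2*M+2) ≠ 0 := by nlinarith
  have d3 : (I+1) ≠ 0 := by nlinarith
  have d4 : (2*M+1-I) ≠ 0 := by nlinarith
  have d5 : (2*M+2-I) ≠ 0 := by nlinarith
  have d6 : (2*M+1+I) ≠ 0 := by nlinarith
  have d7 : (2*M+2+I) ≠ 0 := by nlinarith
  have d8 : (2*M+3+I) ≠ 0 := by nlinarith
  have d9 : (4*M+1-I) ≠ 0 := by nlinarith
  have d10 : (4*M+2-I) ≠ 0 := by nlinarith
  have d11 : (4*M+3-I) ≠ 0 := by nlinarith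
  have d12 : (4*M+4-I) ≠ 0 := by nlinarith
  have e1 : 2 * m + 2 - i = (2 * m - i) + 2 := by omega
  have e2 : 2 * m + 2 - (i + 1) = (2 * m - i) + 1 := by omega
  have ecast : ((2 * m - i : ℕ) : ℚ) = 2 * M - I := by
    push_cast [Nat.cast_sub hi]; ring
  -- small gchoose relations
  have hx : gchoose (-2*M-3) i = (2*M+1+I)*(2*M+2+I)/((2*M+1)*(2*M+2)) * gchoose (-2*M-1) i := by
    have h := gchoose_top (-2*M-3) i
    rw [show (-2*M-3+2 : ℚ) = -2*M-1 from by ring] at h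
    rw [div_mul_eq_mul_div, eq_div_iff (mul_ne_zero d1 d2)]
    linear_combination h
  have hy : gchoose (-2*M-3) (2*m-i)
      = (4*M+1-I)*(4*M+2-I)/((2*M+1)*(2*M+2)) * gchoose (-2*M-1) (2*m-i) := by
    have h := gchoose_top (-2*M-3) (2*m-i)
    rw [show (-2*M-3+2 : ℚ) = -2*M-1 from by ring, ecast] at h
    rw [div_mul_eq_mul_div, eq_div_iff (mul_ne_zero d1 d2)]
    linear_combination h
  have hz : gchoose (2*M) i = (2*M+1-I)*(2*M+2-I)/((2*M+1)*(2*M+2)) * gchoose (2*M+2) i := by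
    have h := gchoose_top (2*M) i
    rw [div_mul_eq_mul_div, eq_div_iff (mul_ne_zero d1 d2)]
    linear_combination h
  have hs1 : gchoose (-2*M-3) ((2*m-i)+1)
      = (-(4*M+3-I))/(2*M+1-I) * gchoose (-2*M-3) (2*m-i) := by
    have h := gchoose_succ (-2*M-3) (2*m-i)
    rw [ecast] at h
    rw [div_mul_eq_mul_div, eq_div_iff d4]
    linear_combination h
  have hs2 : gchoose (-2*M-3) ((2*m-i)+2)
      = (-(4*M+4-I))/(2*M+2-I) * gchoose (-2*M-3) ((2*m-i)+1) := by
    have h := gchoose_succ (-2*M-3) ((2*m-i)+1)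
    push_cast [Nat.cast_sub hi] at h
    rw [div_mul_eq_mul_div, eq_div_iff d5]
    rw [show ((2:ℚ)*M - I + 1 + 1) = 2*M-I+2 from by ring] at h
    rw [show (2*m-i)+1+1 = (2*m-i)+2 from rfl] at h
    linear_combination h
  have hd : gchoose (-2*M-3) (i+1) = (-(2*M+3+I))/(I+1) * gchoose (-2*M-3) i := by
    have h := gchoose_succ (-2*M-3) i
    rw [div_mul_eq_mul_div, eq_div_iff d3]
    linear_combination h
  have hf : gchoose (2*M+2) (i+1) = (2*M+2-I)/(I+1) * gchoose (2*M+2) i := by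
    have h := gchoose_succ (2*M+2) i
    rw [div_mul_eq_mul_div, eq_div_iff d3]
    linear_combination h
  -- express T0 and T1(i+1) in terms of T1 i
  have hT0 : T0 m i
      = ((2*M+1-I)^2 * (2*M+2-I)^2 * (2*M+1) * (2*M+2) /
          ((2*M+1+I) * (2*M+2+I) * (4*M+1-I) * (4*M+2-I) * (4*M+3-I) * (4*M+4-I))) * T1 m i := by
    unfold T0 T1
    rw [show (-2 * (m:ℚ) - 3) = -2*M-3 from by rw [hMdef],
        show (-2 * (m:ℚ) - 1) = -2*M-1 from by rw [hMdef],
        show (2 * (m:ℚ) + 2) = 2*M+2 from by rw [hMdef],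
        show (2 * (m:ℚ)) = 2*M from by rw [hMdef], e1]
    rw [hs2, hs1, hy, hx, hz]
    field_simp
    rw [eq_div_iff (by apply ne_of_gt; apply mul_pos (mul_pos (mul_pos ?_ ?_) ?_) ?_ <;> linarith)]
    ring
  have hT1 : T1 m (i+1)
      = (-(2*M+3+I) * (2*M+2-I)^2 / ((I+1)^2 * (4*M+4-I))) * T1 m i := by
    unfold T1
    rw [show (-2 * (m:ℚ) - 3) = -2*M-3 from by rw [hMdef],
        show (2 * (m:ℚ) + 2) = 2*M+2 from by rw [hMdef], e1, e2]
    rw [hs2, hd, hf, pow_succ]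
    field_simp
    rw [eq_div_iff (by apply ne_of_gt; linarith)]
  have hsc := scalar_id M I d3 d6 d7 d8 d9 d10 d11 d12
  unfold Gc
  rw [show ((i+1 : ℕ) : ℚ) = I + 1 from by push_cast; rw [hIdef],
      show ((m : ℕ) : ℚ) = M from hMdef.symm,
      show ((i : ℕ) : ℚ) = I from hIdef.symm]
  rw [hT0, hT1]
  linear_combination (T1 m i) * hsc

lemma T0_big_eq_zero (m i : ℕ) (h : 2 * m < i) : T0 m i = 0 := by
  unfold T0
  have hz : gchoose (2 * (m : ℚ)) i = 0 := by
    rw [show (2 * (m : ℚ)) = ((2 * m : ℕ) : ℚ) from by push_cast; ring]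
    exact gchoose_nat_eq_zero _ _ h
  rw [hz]; ring

lemma Gc_zero (m : ℕ) : Gc m 0 = 0 := by
  unfold Gc certQ
  norm_num

lemma Gc_top (m : ℕ) : Gc m (2 * m + 3) = 0 := by
  have hz : gchoose (2 * (m : ℚ) + 2) (2 * m + 3) = 0 := by
    rw [show (2 * (m : ℚ) + 2) = ((2 * m + 2 : ℕ) : ℚ) from by push_cast; ring]
    exact gchoose_nat_eq_zero _ _ (by omega)
  unfold Gc T1
  rw [hz]; ring

set_option maxHeartbeats 2000000 in
lemma key_edge1 (m : ℕ) (hm : 1 ≤ m) :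
    (-((m : ℚ) + 1) ^ 2) * T1 m (2*m+1)
      + (-3 * (3 * (m : ℚ) + 1) * (3 * (m : ℚ) + 2)) * T0 m (2*m+1)
      = Gc m (2*m+2) - Gc m (2*m+1) := by
  have hM : (1 : ℚ) ≤ (m : ℚ) := by exact_mod_cast hm
  rw [T0_big_eq_zero m (2*m+1) (by omega), mul_zero, add_zero]
  unfold Gc T1
  rw [show 2*m+2-(2*m+1) = 1 from by omega, show 2*m+2-(2*m+2) = 0 from by omega,
      gchoose_zero, gchoose_one]
  rw [show ((2*m+2 : ℕ) : ℚ) = 2*(m:ℚ)+2 from by push_cast; ring,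
      show ((2*m+1 : ℕ) : ℚ) = 2*(m:ℚ)+1 from by push_cast; ring]
  have h1 := gchoose_succ (-2*(m:ℚ)-3) (2*m+1)
  have h2 := gchoose_succ (2*(m:ℚ)+2) (2*m+1)
  push_cast at h1 h2
  rw [show 2*m+2 = (2*m+1)+1 from by omega]
  unfold certQ
  have d1 : (2*(m:ℚ)+1) ≠ 0 := by nlinarith
  have d2 : (2*(m:ℚ)+2) ≠ 0 := by nlinarith
  have d2' : (2*(m:ℚ)+3) ≠ 0 := by nlinarith
  have d0 : (2*(m:ℚ)) ≠ 0 := by nlinarith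
  have d3 : (4*(m:ℚ)+2) ≠ 0 := by nlinarith
  have d4 : (4*(m:ℚ)+3) ≠ 0 := by nlinarith
  have d5 : (4*(m:ℚ)+4) ≠ 0 := by nlinarith
  rw [show (2*(m:ℚ)+1+(2*(m:ℚ)+1)) = 4*(m:ℚ)+2 from by ring,
      show (2*(m:ℚ)+2+(2*(m:ℚ)+1)) = 4*(m:ℚ)+3 from by ring,
      show (4*(m:ℚ)+2-(2*(m:ℚ)+1)) = 2*(m:ℚ)+1 from by ring,
      show (4*(m:ℚ)+3-(2*(m:ℚ)+1)) = 2*(m:ℚ)+2 from by ring,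
      show (4*(m:ℚ)+4-(2*(m:ℚ)+1)) = 2*(m:ℚ)+3 from by ring,
      show (2*(m:ℚ)+1+(2*(m:ℚ)+2)) = 4*(m:ℚ)+3 from by ring,
      show (2*(m:ℚ)+2+(2*(m:ℚ)+2)) = 4*(m:ℚ)+4 from by ring,
      show (4*(m:ℚ)+2-(2*(m:ℚ)+2)) = 2*(m:ℚ) from by ring,
      show (4*(m:ℚ)+3-(2*(m:ℚ)+2)) = 2*(m:ℚ)+1 from by ring,
      show (4*(m:ℚ)+4-(2*(m:ℚ)+2)) = 2*(m:ℚ)+2 from by ring]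
  rw [pow_succ]
  have hq : gchoose (-2*(m:ℚ)-3) (2*m+1+1)
      = (-2*(m:ℚ)-3-(2*(m:ℚ)+1))/(2*(m:ℚ)+1+1) * gchoose (-2*(m:ℚ)-3) (2*m+1) := by
    rw [div_mul_eq_mul_div, eq_div_iff (by nlinarith)]
    linear_combination h1
  have hr : gchoose (2*(m:ℚ)+2) (2*m+1+1)
      = (2*(m:ℚ)+2-(2*(m:ℚ)+1))/(2*(m:ℚ)+1+1) * gchoose (2*(m:ℚ)+2) (2*m+1) := by
    rw [div_mul_eq_mul_div, eq_div_iff (by nlinarith)]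
    linear_combination h2
  rw [hq, hr]
  field_simp
  ring

set_option maxHeartbeats 2000000 in
lemma key_edge2 (m : ℕ) (hm : 1 ≤ m) :
    (-((m : ℚ) + 1) ^ 2) * T1 m (2*m+2)
      + (-3 * (3 * (m : ℚ) + 1) * (3 * (m : ℚ) + 2)) * T0 m (2*m+2)
      = Gc m (2*m+3) - Gc m (2*m+2) := by
  have hM : (1 : ℚ) ≤ (m : ℚ) := by exact_mod_cast hm
  rw [T0_big_eq_zero m (2*m+2) (by omega), mul_zero, add_zero,
      show 2*m+3 = 2*m+3 from rfl, Gc_top, zero_sub]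
  unfold Gc
  have hc : certQ ((m : ℕ) : ℚ) ((2*m+2 : ℕ) : ℚ) = ((m:ℚ)+1)^2 := by
    unfold certQ
    rw [show ((2*m+2 : ℕ) : ℚ) = 2*(m:ℚ)+2 from by push_cast; ring]
    rw [show (2*(m:ℚ)+1+(2*(m:ℚ)+2)) = 4*(m:ℚ)+3 from by ring,
        show (2*(m:ℚ)+2+(2*(m:ℚ)+2)) = 4*(m:ℚ)+4 from by ring,
        show (4*(m:ℚ)+2-(2*(m:ℚ)+2)) = 2*(m:ℚ) from by ring,
        show (4*(m:ℚ)+3-(2*(m:ℚ)+2)) = 2*(m:ℚ)+1 from by ring,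
        show (4*(m:ℚ)+4-(2*(m:ℚ)+2)) = 2*(m:ℚ)+2 from by ring]
    have d0 : (2*(m:ℚ)) ≠ 0 := by nlinarith
    have d1 : (2*(m:ℚ)+1) ≠ 0 := by nlinarith
    have d2 : (2*(m:ℚ)+2) ≠ 0 := by nlinarith
    have d4 : (4*(m:ℚ)+3) ≠ 0 := by nlinarith
    have d5 : (4*(m:ℚ)+4) ≠ 0 := by nlinarith
    rw [div_eq_iff (by exact mul_ne_zero (mul_ne_zero (mul_ne_zero (mul_ne_zero
      (mul_ne_zero two_ne_zero d4) d5) d0) d1) d2)]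
    ring
  rw [hc]
  ring

/-- For every `m ≥ 1`, `-(m+1)^2 Sum(m+1) - 3(3m+1)(3m+2) Sum(m) = 0`. -/
theorem stmt1 (m : ℕ) (hm : 1 ≤ m) :
    -((m : ℚ) + 1) ^ 2 * zhuSum (m + 1) - 3 * (3 * (m : ℚ) + 1) * (3 * (m : ℚ) + 2) * zhuSum m
      = 0 := by
  have key_all : ∀ i ∈ Finset.range (2*m+3),
      (-((m : ℚ) + 1) ^ 2) * T1 m i + (-3 * (3 * (m : ℚ) + 1) * (3 * (m : ℚ) + 2)) * T0 m i
        = Gc m (i+1) - Gc m i := by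
    intro i hi
    rw [Finset.mem_range] at hi
    rcases lt_or_ge i (2*m+1) with h | h
    · exact key_main m i hm (by omega)
    · rcases (by omega : i = 2*m+1 ∨ i = 2*m+2) with rfl | rfl
      · rw [show 2*m+1+1 = 2*m+2 from by omega]
        exact key_edge1 m hm
      · rw [show 2*m+2+1 = 2*m+3 from by omega]
        exact key_edge2 m hm
  have hsum := Finset.sum_congr rfl key_all
  rw [Finset.sum_add_distrib, ← Finset.mul_sum, ← Finset.mul_sum,
      Finset.sum_range_sub (Gc m)] at hsum
  have h1 : ∑ i ∈ Finset.range (2*m+3), T1 m i = zhuSum (m+1) := by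
    unfold zhuSum T1
    rw [show 2*(m+1)+1 = 2*m+3 from by ring]
    apply Finset.sum_congr rfl
    intro i _
    rw [show (-2 * ((m+1 : ℕ) : ℚ) - 1) = -2*(m:ℚ)-3 from by push_cast; ring,
        show (2 * ((m+1 : ℕ) : ℚ)) = 2*(m:ℚ)+2 from by push_cast; ring,
        show 2*(m+1) - i = 2*m+2-i from by omega]
  have h0 : ∑ i ∈ Finset.range (2*m+3), T0 m i = zhuSum m := by
    rw [show 2*m+3 = (2*m+2)+1 from by omega, Finset.sum_range_succ,
        show 2*m+2 = (2*m+1)+1 from by omega, Finset.sum_range_succ,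
        T0_big_eq_zero m ((2*m+1)+1) (by omega), T0_big_eq_zero m (2*m+1) (by omega),
        add_zero, add_zero]
    rfl
  rw [h1, h0, Gc_zero, Gc_top] at hsum
  linarith [hsum]
end

section
/- For all integers k ≥ 1 and p ≥ k, the sum Σ_{i=k}^{2p-k} (-1)^i C(2p,i) C(-2p, 2p-k-i) C(-2p, i-k) equals 2(-1)^p (3p-1-k)! / ((2p-k) * ((p-1)!)^2 * (p-k)!). -/
set_option maxHeartbeats 1600000

namespace St4

lemma gchoose_zero (t : ℚ) : gchoose t 0 = 1 := by simp [gchoose]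

noncomputable def f (p k i : ℕ) : ℚ :=
  (-1 : ℚ) ^ i * gchoose (2 * p) i * gchoose (-2 * p) (2 * p - k - i) *
    gchoose (-2 * p) (i - k)

noncomputable def g (p k i : ℕ) : ℚ := if k ≤ i ∧ i ≤ 2 * p - k then f p k i else 0

noncomputable def Rc (p k i : ℕ) : ℚ :=
  ((4 * (p : ℚ) - 2 * k - 1) * i * ((i : ℚ) - k)) / (2 * ((i : ℚ) + 2 * p - k - 1))

noncomputable def RHS (p k : ℕ) : ℚ :=
  2 * (-1 : ℚ) ^ p * (Nat.factorial (3 * p - 1 - k)) /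
    ((2 * (p : ℚ) - k) * (Nat.factorial (p - 1) : ℚ) ^ 2 * (Nat.factorial (p - k)))

lemma gchoose_succ (t : ℚ) (m : ℕ) :
    gchoose t (m + 1) = gchoose t m * ((t - m) / (m + 1)) := by
  have h1 : (Nat.factorial m : ℚ) ≠ 0 := Nat.cast_ne_zero.2 (Nat.factorial_ne_zero m)
  have h2 : ((m : ℚ) + 1) ≠ 0 := by positivity
  unfold gchoose
  rw [Finset.prod_range_succ, Nat.factorial_succ]
  push_cast
  rw [div_mul_div_comm]
  ring


lemma lemma_prod_range_cast (n : ℕ) : ∀ i ≤ n,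
    (∏ j ∈ Finset.range i, ((n : ℚ) - j)) * ((n - i).factorial : ℚ) = (n.factorial : ℚ) := by
  intro i
  induction i with
  | zero => simp
  | succ i ih =>
    intro h
    have h' : i ≤ n := Nat.le_of_succ_le h
    have key : ((n : ℚ) - i) * ((n - (i + 1)).factorial : ℚ) = ((n - i).factorial : ℚ) := by
      have e : n - i = (n - (i + 1)) + 1 := by omega
      rw [e, Nat.factorial_succ]
      have e2 : ((n - (i + 1) : ℕ) : ℚ) = (n : ℚ) - i - 1 := by
        rw [Nat.cast_sub h]; push_cast; ring
      push_cast [e2]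
      ring
    rw [Finset.prod_range_succ, mul_assoc, key, ih h']


lemma key (p k i : ℕ) (h1 : 1 ≤ k) (h2 : k + 1 ≤ p) (hik : k ≤ i) (hi : i ≤ 2 * p - k) :
    (3 * (p : ℚ) - k - 1) * (2 * (p : ℚ) - k - 1) * g p (k + 1) i
      - (2 * (p : ℚ) - k) * ((p : ℚ) - k) * f p k i
    = Rc p k (i + 1) * g p k (i + 1) - Rc p k i * g p k i := by
  have hkQ : (1 : ℚ) ≤ (k : ℚ) := by exact_mod_cast h1
  have hpQ : (k : ℚ) + 1 ≤ (p : ℚ) := by exact_mod_cast h2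
  have hgi : g p k i = f p k i := if_pos ⟨hik, hi⟩
  rw [hgi]
  by_cases htop : i = 2 * p - k
  · have e1 : g p (k + 1) i = 0 := by
      apply if_neg; rintro ⟨-, h⟩; omega
    have e2 : g p k (i + 1) = 0 := by
      apply if_neg; rintro ⟨-, h⟩; omega
    rw [e1, e2]
    have hiQ : (i : ℚ) = 2 * p - k := by
      have h' : i + k = 2 * p := by omega
      have := congrArg (Nat.cast : ℕ → ℚ) h'
      push_cast at this
      linarith
    have : Rc p k i = (2 * (p : ℚ) - k) * ((p : ℚ) - k) := by
      unfold Rc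
      rw [hiQ]
      have hd : (2 * ((2 * (p:ℚ) - k) + 2 * p - k - 1)) ≠ 0 := by
        apply ne_of_gt; linarith
      rw [div_eq_iff hd]
      ring
    rw [this]
    ring
  · by_cases hbot : i = k
    · have e1 : g p (k + 1) i = 0 := by
        apply if_neg; rintro ⟨h, -⟩; omega
      have hiQ : (i : ℚ) = k := by exact_mod_cast hbot
      have e2 : Rc p k i = 0 := by
        unfold Rc; rw [hiQ, sub_self, mul_zero, zero_div]
      have e3 : g p k (i + 1) = f p k (i + 1) := by
        apply if_pos; constructor <;> omega
      rw [e1, e2, e3]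
      obtain ⟨m, hm⟩ : ∃ m, 2 * p = 2 * k + 1 + m := ⟨2 * p - 2 * k - 1, by omega⟩
      have i1 : 2 * p - k - i = m + 1 := by omega
      have i2 : i - k = 0 := by omega
      have i3 : 2 * p - k - (i + 1) = m := by omega
      have i4 : i + 1 - k = 1 := by omega
      unfold f
      rw [i1, i2, i3, i4]
      rw [show (1:ℕ) = 0 + 1 from rfl, gchoose_succ (-2*(p:ℚ)) 0,
          gchoose_succ (-2*(p:ℚ)) m, gchoose_succ (2*(p:ℚ)) i, gchoose_zero, pow_succ]
      have hmQ : (m:ℚ) = 2 * p - 2 * k - 1 := by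
        have := congrArg (Nat.cast : ℕ → ℚ) hm; push_cast at this; linarith
      have hm1 : (m:ℚ) + 1 = 2 * p - 2 * k := by linarith
      unfold Rc
      set A := gchoose (2*(p:ℚ)) i with hA
      set B := gchoose (-2*(p:ℚ)) m with hB
      push_cast
      rw [hm1, hmQ, hiQ]
      have d1 : (2*(p:ℚ) - 2*k) ≠ 0 := by apply ne_of_gt; linarith
      have d2 : ((k:ℚ) + 1) ≠ 0 := by positivity
      have d4 : 2 * ((k:ℚ) + 1 + 2*p - k - 1) ≠ 0 := by apply ne_of_gt; linarith
      have d5 : ((p:ℚ) - k) ≠ 0 := by apply ne_of_gt; linarith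
      have d6 : (p:ℚ) ≠ 0 := by apply ne_of_gt; linarith
      rw [show (k:ℚ) + 1 + 2*p - k - 1 = 2*p by ring, show (-2 * (p:ℚ) - 0) / (0 + 1) = -2*p by ring]
      field_simp
      ring
    · have hik1 : k + 1 ≤ i := by omega
      have hi1 : i + 1 ≤ 2 * p - k := by omega
      have hnat : i + 1 + k ≤ 2 * p := by omega
      have e1 : g p (k + 1) i = f p (k + 1) i := by
        apply if_pos; constructor <;> omega
      have e3 : g p k (i + 1) = f p k (i + 1) := by
        apply if_pos; constructor <;> omega
      rw [e1, e3]
      obtain ⟨n, hn⟩ : ∃ n, i = k + 1 + n := ⟨i - k - 1, by omega⟩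
      obtain ⟨m, hm⟩ : ∃ m, 2 * p = i + k + 1 + m := ⟨2 * p - i - k - 1, by omega⟩
      have i1 : 2 * p - k - i = m + 1 := by omega
      have i2 : i - k = n + 1 := by omega
      have i3 : 2 * p - (k + 1) - i = m := by omega
      have i4 : i - (k + 1) = n := by omega
      have i5 : 2 * p - k - (i + 1) = m := by omega
      have i6 : i + 1 - k = n + 2 := by omega
      unfold f
      rw [i1, i2, i3, i4, i5, i6]
      rw [show n + 2 = (n + 1) + 1 from rfl]
      rw [gchoose_succ (-2 * (p:ℚ)) (n+1), gchoose_succ (-2 * (p:ℚ)) n,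
        gchoose_succ (-2 * (p:ℚ)) m, gchoose_succ (2 * (p:ℚ)) i, pow_succ]
      have hmQ : (m : ℚ) = 2 * p - k - i - 1 := by
        have := congrArg (Nat.cast : ℕ → ℚ) hm; push_cast at this; linarith
      have hnQ : (n : ℚ) = i - k - 1 := by
        have := congrArg (Nat.cast : ℕ → ℚ) hn; push_cast at this; linarith
      have hiQlo : (k : ℚ) + 1 ≤ (i : ℚ) := by exact_mod_cast hik1
      have hiQhi : (i : ℚ) + 1 + (k : ℚ) ≤ 2 * p := by exact_mod_cast hnat
      have hm1 : (m:ℚ) + 1 = 2 * p - k - i := by linarith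
      have hn1 : (n:ℚ) + 1 = i - k := by linarith
      unfold Rc
      set A := gchoose (2*(p:ℚ)) i with hA
      set B := gchoose (-2*(p:ℚ)) m with hB
      set C := gchoose (-2*(p:ℚ)) n with hC
      push_cast
      rw [hm1, hn1, hmQ, hnQ]
      have d1 : (2 * (p:ℚ) - k - i) ≠ 0 := by apply ne_of_gt; linarith
      have d2 : ((i:ℚ) - k) ≠ 0 := by apply ne_of_gt; linarith
      have d2' : ((i:ℚ) - k + 1) ≠ 0 := by apply ne_of_gt; linarith
      have d3 : ((i:ℚ) + 1) ≠ 0 := by positivity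
      have d4 : 2 * ((i:ℚ) + 2 * p - k - 1) ≠ 0 := by apply ne_of_gt; linarith
      have d5 : 2 * ((i:ℚ) + 1 + 2 * p - k - 1) ≠ 0 := by apply ne_of_gt; linarith
      have d6 : ((i:ℚ) + 2 * p - k - 1) ≠ 0 := by apply ne_of_gt; linarith
      have d7 : ((i:ℚ) + 2 * p - k) ≠ 0 := by apply ne_of_gt; linarith
      have d8 : (2 * (p:ℚ) - k + i) ≠ 0 := by apply ne_of_gt; linarith
      have d9 : (2 * (p:ℚ) - k + i - 1) ≠ 0 := by apply ne_of_gt; linarith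
      have d10 : ((p:ℚ) * 2 - k - i) ≠ 0 := by apply ne_of_gt; linarith
      have d11 : ((i:ℚ) + 1 + p * 2 - k - 1) ≠ 0 := by apply ne_of_gt; linarith
      have d12 : ((i:ℚ) + p * 2 - k - 1) ≠ 0 := by apply ne_of_gt; linarith
      field_simp
      ring


lemma tele (p k : ℕ) (h2 : k + 1 ≤ p) :
    ∑ i ∈ Finset.Icc k (2 * p - k),
      (Rc p k (i + 1) * g p k (i + 1) - Rc p k i * g p k i) = 0 := by
  rw [← Finset.Ico_add_one_right_eq_Icc, Finset.sum_Ico_eq_sum_range]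
  have e : ∀ a ∈ Finset.range (2 * p - k + 1 - k),
      (fun i => Rc p k (i + 1) * g p k (i + 1) - Rc p k i * g p k i) (k + a)
      = (fun a => Rc p k (k + a) * g p k (k + a)) (a + 1)
        - (fun a => Rc p k (k + a) * g p k (k + a)) a := by
    intro a _
    simp only [Nat.add_succ]
  rw [Finset.sum_congr rfl e, Finset.sum_range_sub (fun a => Rc p k (k + a) * g p k (k + a))]
  have e2 : k + (2 * p - k + 1 - k) = 2 * p - k + 1 := by omega
  rw [e2]
  have g1 : g p k (2 * p - k + 1) = 0 := by
    apply if_neg; rintro ⟨-, h⟩; omega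
  have g2 : Rc p k k = 0 := by
    unfold Rc; rw [sub_self, mul_zero, zero_div]
  rw [g1, mul_zero]
  simp [g2]

lemma sum_g (p k : ℕ) (h2 : k + 1 ≤ p) :
    ∑ i ∈ Finset.Icc k (2 * p - k), g p (k + 1) i
      = ∑ i ∈ Finset.Icc (k + 1) (2 * p - (k + 1)), f p (k + 1) i := by
  have hsub : Finset.Icc (k + 1) (2 * p - (k + 1)) ⊆ Finset.Icc k (2 * p - k) :=
    Finset.Icc_subset_Icc (by omega) (by omega)
  rw [← Finset.sum_subset hsub]
  · apply Finset.sum_congr rfl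
    intro i hi
    rw [Finset.mem_Icc] at hi
    exact if_pos ⟨hi.1, hi.2⟩
  · intro i _ hni
    rw [Finset.mem_Icc] at hni
    push_neg at hni
    apply if_neg
    rintro ⟨ha, hb⟩
    omega

lemma step (p k : ℕ) (h1 : 1 ≤ k) (h2 : k + 1 ≤ p) :
    ∑ i ∈ Finset.Icc k (2 * p - k), f p k i
      = ((3 * (p : ℚ) - k - 1) * (2 * (p : ℚ) - k - 1))
          / ((2 * (p : ℚ) - k) * ((p : ℚ) - k))
        * ∑ i ∈ Finset.Icc (k + 1) (2 * p - (k + 1)), f p (k + 1) i := by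
  have hkQ : (1 : ℚ) ≤ (k : ℚ) := by exact_mod_cast h1
  have hpQ : (k : ℚ) + 1 ≤ (p : ℚ) := by exact_mod_cast h2
  have hsum : ∑ i ∈ Finset.Icc k (2 * p - k),
      ((3 * (p : ℚ) - k - 1) * (2 * (p : ℚ) - k - 1) * g p (k + 1) i
        - (2 * (p : ℚ) - k) * ((p : ℚ) - k) * f p k i) = 0 := by
    have h1' : (∑ i ∈ Finset.Icc k (2 * p - k),
        ((3 * (p : ℚ) - k - 1) * (2 * (p : ℚ) - k - 1) * g p (k + 1) i
          - (2 * (p : ℚ) - k) * ((p : ℚ) - k) * f p k i))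
        = ∑ i ∈ Finset.Icc k (2 * p - k),
            (Rc p k (i + 1) * g p k (i + 1) - Rc p k i * g p k i) :=
      Finset.sum_congr rfl (fun i hi => by
        rw [Finset.mem_Icc] at hi
        exact key p k i h1 h2 hi.1 hi.2)
    rw [h1']
    exact tele p k h2
  rw [Finset.sum_sub_distrib, ← Finset.mul_sum, ← Finset.mul_sum, sum_g p k h2] at hsum
  have hc2 : (2 * (p : ℚ) - k) * ((p : ℚ) - k) ≠ 0 :=
    mul_ne_zero (ne_of_gt (by linarith : (0:ℚ) < 2 * (p:ℚ) - k))
      (ne_of_gt (by linarith : (0:ℚ) < (p:ℚ) - k))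
  rw [div_mul_eq_mul_div, eq_div_iff hc2]
  linarith [hsum]

lemma rhs_step (p k : ℕ) (h1 : 1 ≤ k) (h2 : k + 1 ≤ p) :
    RHS p k = ((3 * (p : ℚ) - k - 1) * (2 * (p : ℚ) - k - 1))
        / ((2 * (p : ℚ) - k) * ((p : ℚ) - k)) * RHS p (k + 1) := by
  have hkQ : (1 : ℚ) ≤ (k : ℚ) := by exact_mod_cast h1
  have hpQ : (k : ℚ) + 1 ≤ (p : ℚ) := by exact_mod_cast h2
  obtain ⟨a, ha⟩ : ∃ a, 3 * p - 1 - k = a + 1 := ⟨3 * p - 2 - k, by omega⟩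
  have ha2 : 3 * p - 1 - (k + 1) = a := by omega
  obtain ⟨b, hb⟩ : ∃ b, p - k = b + 1 := ⟨p - k - 1, by omega⟩
  have hb2 : p - (k + 1) = b := by omega
  have haQ : (a : ℚ) = 3 * p - 2 - k := by
    have : a + 1 + k = 3 * p - 1 := by omega
    have h3 : a + 1 + k + 1 = 3 * p := by omega
    have := congrArg (Nat.cast : ℕ → ℚ) h3
    push_cast at this
    linarith
  have hbQ : (b : ℚ) = p - k - 1 := by
    have h3 : b + 1 + k = p := by omega
    have := congrArg (Nat.cast : ℕ → ℚ) h3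
    push_cast at this
    linarith
  unfold RHS
  rw [ha, ha2, hb, hb2, Nat.factorial_succ a, Nat.factorial_succ b]
  push_cast
  rw [haQ, hbQ]
  have d1 : (2 * (p : ℚ) - k) ≠ 0 := by apply ne_of_gt; linarith
  have d2 : (2 * (p : ℚ) - (k + 1)) ≠ 0 := by apply ne_of_gt; linarith
  have d3 : ((p : ℚ) - k) ≠ 0 := by apply ne_of_gt; linarith
  have d4 : ((Nat.factorial a : ℚ)) ≠ 0 := Nat.cast_ne_zero.2 (Nat.factorial_ne_zero a)
  have d5 : ((Nat.factorial b : ℚ)) ≠ 0 := Nat.cast_ne_zero.2 (Nat.factorial_ne_zero b)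
  have d6 : ((Nat.factorial (p - 1) : ℚ)) ≠ 0 := Nat.cast_ne_zero.2 (Nat.factorial_ne_zero _)
  have d7 : ((p : ℚ) - k - 1 + 1) ≠ 0 := by apply ne_of_gt; linarith
  have d8 : (3 * (p : ℚ) - 2 - k + 1) ≠ 0 := by apply ne_of_gt; linarith
  field_simp
  ring

lemma base (p : ℕ) (hp : 1 ≤ p) :
    ∑ i ∈ Finset.Icc p (2 * p - p), f p p i = RHS p p := by
  have hpQ : (1 : ℚ) ≤ (p : ℚ) := by exact_mod_cast hp
  have e0 : 2 * p - p = p := by omega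
  rw [e0, Finset.Icc_self, Finset.sum_singleton]
  unfold f RHS
  have e1 : 2 * p - p - p = 0 := by omega
  have e2 : p - p = 0 := by omega
  have e3 : 3 * p - 1 - p = 2 * p - 1 := by omega
  rw [e1, e2, e3]
  have hg : gchoose (2 * (p : ℚ)) p * (Nat.factorial p : ℚ) = ((2 * p).factorial : ℚ) / (Nat.factorial p : ℚ) := by
    have h := lemma_prod_range_cast (2 * p) p (by omega)
    have e4 : 2 * p - p = p := by omega
    rw [e4] at h
    push_cast at h
    unfold gchoose
    have dfp : ((Nat.factorial p : ℚ)) ≠ 0 := Nat.cast_ne_zero.2 (Nat.factorial_ne_zero p)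
    field_simp
    linarith [h]
  rw [gchoose_zero, mul_one, mul_one]
  have hgg : gchoose (2 * (p:ℚ)) p
      = ((2 * p).factorial : ℚ) / ((Nat.factorial p : ℚ) * (Nat.factorial p : ℚ)) := by
    have dfp : ((Nat.factorial p : ℚ)) ≠ 0 := Nat.cast_ne_zero.2 (Nat.factorial_ne_zero p)
    field_simp at hg ⊢
    linarith [hg]
  have hf2pN : (2 * p).factorial = (2 * p) * (2 * p - 1).factorial := by
    conv_lhs => rw [show 2 * p = (2 * p - 1) + 1 from by omega]
    rw [Nat.factorial_succ]
    congr 1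
    omega
  have hf2p : ((2 * p).factorial : ℚ) = (2 * (p:ℚ)) * ((2 * p - 1).factorial : ℚ) := by
    rw [hf2pN]
    push_cast
    ring
  have hfpN : Nat.factorial p = p * Nat.factorial (p - 1) := by
    conv_lhs => rw [show p = (p - 1) + 1 from by omega]
    rw [Nat.factorial_succ]
    congr 1
    omega
  have hfp : ((Nat.factorial p : ℚ)) = (p : ℚ) * ((Nat.factorial (p - 1)) : ℚ) := by
    rw [hfpN]
    push_cast
    ring
  have dY : ((Nat.factorial (p - 1) : ℚ)) ≠ 0 := Nat.cast_ne_zero.2 (Nat.factorial_ne_zero _)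
  have dfp : ((Nat.factorial p : ℚ)) ≠ 0 := Nat.cast_ne_zero.2 (Nat.factorial_ne_zero p)
  have dp : (p : ℚ) ≠ 0 := by apply ne_of_gt; linarith
  rw [hgg, Nat.factorial_zero]
  push_cast
  rw [mul_div_assoc', div_eq_div_iff]
  · rw [hf2p, hfp]; ring
  · exact mul_ne_zero dfp dfp
  · apply ne_of_gt
    have hY2 : (0:ℚ) < ((Nat.factorial (p - 1) : ℚ))^2 := by positivity
    nlinarith [hY2, hpQ]

lemma main (p : ℕ) (hp : 1 ≤ p) :
    ∀ d k, 1 ≤ k → k + d = p →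
      ∑ i ∈ Finset.Icc k (2 * p - k), f p k i = RHS p k := by
  intro d
  induction d with
  | zero =>
    intro k h1 h2
    have hkp : k = p := by omega
    subst hkp
    exact base k hp
  | succ d ih =>
    intro k h1 h2
    have h2' : (k + 1) + d = p := by omega
    have hk1p : k + 1 ≤ p := by omega
    rw [step p k h1 hk1p, ih (k + 1) (by omega) h2', ← rhs_step p k h1 hk1p]

end St4

/-- For all integers `k ≥ 1` and `p ≥ k`,
`∑_{i=k}^{2p-k} (-1)^i C(2p,i) C(-2p,2p-k-i) C(-2p,i-k)
  = 2 (-1)^p (3p-1-k)! / ((2p-k) ((p-1)!)^2 (p-k)!)`. -/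
theorem stmt4 (k p : ℕ) (hk : 1 ≤ k) (hp : k ≤ p) :
    ∑ i ∈ Finset.Icc k (2 * p - k),
      (-1 : ℚ) ^ i * gchoose (2 * p) i * gchoose (-2 * p) (2 * p - k - i) *
        gchoose (-2 * p) (i - k)
    = 2 * (-1 : ℚ) ^ p * (Nat.factorial (3 * p - 1 - k)) /
        ((2 * (p : ℚ) - k) * (Nat.factorial (p - 1) : ℚ) ^ 2 * (Nat.factorial (p - k))) := by
  have := St4.main p (by omega) (p - k) k hk (by omega)
  simpa [St4.f, St4.RHS] using this
end

section
/- For integer p ≥ 2, the polynomial G_p(t) = Σ_{i,j,k} C(2p,i) C(-2p,j) C(-2p,k) C(t,2p-1-i-j) C(t,i-1-k) C(2p-1-t,2p+j+k+1) (sum over 1 ≤ i ≤ 2p-1, 0 ≤ j ≤ 2p-i-1, 0 ≤ k ≤ i-1) vanishes at every integer t with 0 ≤ t ≤ 2p-1. -/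
/-- Polynomial generalized binomial coefficient. -/
noncomputable def pchoose (s : Polynomial ℚ) (k : ℕ) : Polynomial ℚ :=
  ((Nat.factorial k : ℚ)⁻¹) • ∏ j ∈ Finset.range k, (s - Polynomial.C (j : ℚ))

open Polynomial in
/-- The triple-binomial sum `G_p(t)` as a polynomial in `t`. -/
noncomputable def Gpoly (p : ℕ) : Polynomial ℚ :=
  ∑ i ∈ Finset.Icc 1 (2 * p - 1), ∑ j ∈ Finset.range (2 * p - i), ∑ k ∈ Finset.range i,
    C (gchoose (2 * p) i * gchoose (-2 * p) j * gchoose (-2 * p) k) *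
      pchoose X (2 * p - 1 - i - j) * pchoose X (i - 1 - k) *
      pchoose (C (2 * (p : ℚ) - 1) - X) (2 * p + j + k + 1)

lemma prod_zero_of_nat_lt (s : ℚ) (n k : ℕ) (hs : s = (n : ℚ)) (hn : n < k) :
    (∏ j ∈ Finset.range k, (s - (j : ℚ))) = 0 := by
  apply Finset.prod_eq_zero (Finset.mem_range.mpr hn)
  simp [hs]

/-- For `p ≥ 2`, `G_p(t)` vanishes at every integer `t` with `0 ≤ t ≤ 2p-1`. -/
theorem stmt8 (p : ℕ) (hp : 2 ≤ p) (t : ℤ) (h0 : 0 ≤ t) (h1 : t ≤ 2 * (p : ℤ) - 1) :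
    (Gpoly p).eval (t : ℚ) = 0 := by
  unfold Gpoly
  rw [Polynomial.eval_finset_sum]
  apply Finset.sum_eq_zero
  intro i hi
  rw [Polynomial.eval_finset_sum]
  apply Finset.sum_eq_zero
  intro j hj
  rw [Polynomial.eval_finset_sum]
  apply Finset.sum_eq_zero
  intro k hk
  have hlast : (pchoose (Polynomial.C (2 * (p : ℚ) - 1) - Polynomial.X)
      (2 * p + j + k + 1)).eval (t : ℚ) = 0 := by
    unfold pchoose
    rw [Polynomial.eval_smul, Polynomial.eval_prod]
    have : (∏ m ∈ Finset.range (2 * p + j + k + 1),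
        ((Polynomial.C (2 * (p : ℚ) - 1) - Polynomial.X - Polynomial.C (m : ℚ)).eval (t : ℚ)))
        = ∏ m ∈ Finset.range (2 * p + j + k + 1), ((2 * (p : ℚ) - 1 - (t : ℚ)) - (m : ℚ)) := by
      apply Finset.prod_congr rfl
      intro m _
      simp
    rw [this]
    set n : ℕ := (2 * (p : ℤ) - 1 - t).toNat with hn
    have hnt : ((n : ℤ)) = 2 * (p : ℤ) - 1 - t := Int.toNat_of_nonneg (by omega)
    have hs : (2 * (p : ℚ) - 1 - (t : ℚ)) = (n : ℚ) := by
      have := congrArg (fun x : ℤ => (x : ℚ)) hnt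
      push_cast at this ⊢
      linarith
    have hlt : n < 2 * p + j + k + 1 := by omega
    rw [prod_zero_of_nat_lt _ n _ hs hlt, smul_zero]
  rw [Polynomial.eval_mul, hlast, mul_zero]
end
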